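/- Let h ∈ C_e(I). Then the function Rh (given by (Rh)(t) = F_j(L_j⁻¹(t), h(L_j⁻¹(t))) for t ∈ I_j) is well-defined (the two formulas agree at the shared endpoints t_j), continuous on I, and satisfies (Rh)(t_j) = (v_j, w_j) for every j = 0, 1, …, N; that is, Rh ∈ C_d(I). -/

import Mathlib

open Set

private lemma glue_Icc {f : ℝ → ℝ × ℝ} {a b c : ℝ} (hab : a ≤ b) (hbc : b ≤ c)
    (h1 : ContinuousOn f (Icc a b)) (h2 : ContinuousOn f (Icc b c)) :
    ContinuousOn f (Icc a c) := by
  rw [← Icc_union_Icc_eq_Icc hab hbc]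
  intro x hx
  rw [continuousWithinAt_union]
  constructor
  · by_cases hx1 : x ∈ Icc a b
    · exact h1 x hx1
    · exact continuousWithinAt_of_notMem_closure (by rwa [isClosed_Icc.closure_eq])
  · by_cases hx2 : x ∈ Icc b c
    · exact h2 x hx2
    · exact continuousWithinAt_of_notMem_closure (by rwa [isClosed_Icc.closure_eq])

/-- For `h ∈ C_e(I)`, the Read–Bajraktarević image `Rh` is a well-defined continuous
function on `I = [t 0, t N]` satisfying `Rh (L j x) = F j x (h x)` on each piece and
interpolating all the data points, i.e. `Rh ∈ C_d(I)`. -/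
theorem RB_maps_Ce_into_Cd
    (N : ℕ) (hN : 0 < N)
    (t v w : ℕ → ℝ)
    (htmono : ∀ j, j < N → t j < t (j + 1))
    (a fc : ℕ → ℝ) (L : ℕ → ℝ → ℝ)
    (hL : ∀ j, 1 ≤ j → j ≤ N → ∀ x : ℝ, L j x = a j * x + fc j)
    (ha : ∀ j, 1 ≤ j → j ≤ N → a j ≠ 0 ∧ |a j| < 1)
    (hL0 : ∀ j, 1 ≤ j → j ≤ N → L j (t 0) = t (j - 1))
    (hLN : ∀ j, 1 ≤ j → j ≤ N → L j (t N) = t j)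
    (b c d e p q : ℕ → ℝ → ℝ)
    (hLip : ∀ j, 1 ≤ j → j ≤ N → ∀ g ∈ ([b j, c j, d j, e j, p j, q j] : List (ℝ → ℝ)),
      ∃ Kg : NNReal, LipschitzOnWith Kg g (Set.Icc (t 0) (t N)))
    (hbd : ∀ j, 1 ≤ j → j ≤ N → ∃ B D : ℝ, B + D ≤ 1 ∧
      (∀ x ∈ Set.Icc (t 0) (t N), |b j x| ≤ B) ∧ (∀ x ∈ Set.Icc (t 0) (t N), |d j x| ≤ D))
    (hce : ∀ j, 1 ≤ j → j ≤ N → ∃ C E : ℝ, C + E ≤ 1 ∧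
      (∀ x ∈ Set.Icc (t 0) (t N), |c j x| ≤ C) ∧ (∀ x ∈ Set.Icc (t 0) (t N), |e j x| ≤ E))
    (s r : ℕ → ℝ → ℝ)
    (hs : ∀ j, 1 ≤ j → j ≤ N → ∀ x y : ℝ, x ≠ y → |s j x - s j y| < |x - y|)
    (hr : ∀ j, 1 ≤ j → j ≤ N → ∀ x y : ℝ, x ≠ y → |r j x - r j y| < |x - y|)
    (F : ℕ → ℝ → ℝ × ℝ → ℝ × ℝ)
    (hF : ∀ j x vw, F j x vw = (b j x * s j vw.1 + c j x * r j vw.2 + p j x,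
                                d j x * s j vw.1 + e j x * r j vw.2 + q j x))
    (hF0 : ∀ j, 1 ≤ j → j ≤ N → F j (t 0) (v 0, w 0) = (v (j - 1), w (j - 1)))
    (hFN : ∀ j, 1 ≤ j → j ≤ N → F j (t N) (v N, w N) = (v j, w j))
    (h : ℝ → ℝ × ℝ) (hhc : ContinuousOn h (Set.Icc (t 0) (t N)))
    (hh0 : h (t 0) = (v 0, w 0)) (hhN : h (t N) = (v N, w N)) :
    ∃ Rh : ℝ → ℝ × ℝ, ContinuousOn Rh (Set.Icc (t 0) (t N)) ∧
      (∀ j, 1 ≤ j → j ≤ N → ∀ x ∈ Set.Icc (t 0) (t N), Rh (L j x) = F j x (h x)) ∧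
      (∀ j, j ≤ N → Rh (t j) = (v j, w j)) := by
  classical
  -- strict monotonicity of t
  have tlt : ∀ i j : ℕ, i < j → j ≤ N → t i < t j := by
    intro i j hij hjN
    induction j with
    | zero => omega
    | succ k ih =>
      rcases Nat.lt_succ_iff_lt_or_eq.mp hij with h' | h'
      · exact lt_trans (ih h' (by omega)) (htmono k (by omega))
      · subst h'; exact htmono i (by omega)
  have tle : ∀ i j : ℕ, i ≤ j → j ≤ N → t i ≤ t j := by
    intro i j hij hjN
    rcases Nat.lt_or_ge i j with h' | h'
    · exact (tlt i j h' hjN).le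
    · have : i = j := le_antisymm hij h'
      simp [this]
  have h0N : t 0 < t N := tlt 0 N hN le_rfl
  -- positivity of a j
  have haj : ∀ j, 1 ≤ j → j ≤ N → 0 < a j := by
    intro j h1j hjN
    have e0 : a j * t 0 + fc j = t (j - 1) := by rw [← hL j h1j hjN]; exact hL0 j h1j hjN
    have eN : a j * t N + fc j = t j := by rw [← hL j h1j hjN]; exact hLN j h1j hjN
    have hj1 : t (j - 1) < t j := tlt (j - 1) j (by omega) hjN
    by_contra hc
    push_neg at hc
    nlinarith
  -- inverse of L j
    -- Linv j y = (y - fc j) / a j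
  set Linv : ℕ → ℝ → ℝ := fun j y => (y - fc j) / a j with hLinvDef
  have hLinvL : ∀ j, 1 ≤ j → j ≤ N → ∀ x : ℝ, Linv j (L j x) = x := by
    intro j h1j hjN x
    have haj' := (haj j h1j hjN).ne'
    simp only [hLinvDef, hL j h1j hjN]
    field_simp
    ring
  have hLinv0 : ∀ j, 1 ≤ j → j ≤ N → Linv j (t (j - 1)) = t 0 := by
    intro j h1j hjN
    rw [← hL0 j h1j hjN, hLinvL j h1j hjN]
  have hLinvN : ∀ j, 1 ≤ j → j ≤ N → Linv j (t j) = t N := by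
    intro j h1j hjN
    rw [← hLN j h1j hjN, hLinvL j h1j hjN]
  have hLinvMono : ∀ j, 1 ≤ j → j ≤ N → ∀ y z : ℝ, y ≤ z → Linv j y ≤ Linv j z := by
    intro j h1j hjN y z hyz
    simp only [hLinvDef]
    have := haj j h1j hjN
    gcongr <;> linarith
  have hLinvMaps : ∀ j, 1 ≤ j → j ≤ N →
      MapsTo (Linv j) (Icc (t (j - 1)) (t j)) (Icc (t 0) (t N)) := by
    intro j h1j hjN y hy
    constructor
    · rw [← hLinv0 j h1j hjN]; exact hLinvMono j h1j hjN _ _ hy.1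
    · rw [← hLinvN j h1j hjN]; exact hLinvMono j h1j hjN _ _ hy.2
  -- continuity of x ↦ F j x (h x) on [t 0, t N]
  have hGcont : ∀ j, 1 ≤ j → j ≤ N →
      ContinuousOn (fun x => F j x (h x)) (Icc (t 0) (t N)) := by
    intro j h1j hjN
    obtain ⟨Kb, hKb⟩ := hLip j h1j hjN (b j) (by simp)
    obtain ⟨Kc, hKc⟩ := hLip j h1j hjN (c j) (by simp)
    obtain ⟨Kd, hKd⟩ := hLip j h1j hjN (d j) (by simp)
    obtain ⟨Ke, hKe⟩ := hLip j h1j hjN (e j) (by simp)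
    obtain ⟨Kp, hKp⟩ := hLip j h1j hjN (p j) (by simp)
    obtain ⟨Kq, hKq⟩ := hLip j h1j hjN (q j) (by simp)
    have hsc : Continuous (s j) := by
      have : LipschitzWith 1 (s j) := by
        apply LipschitzWith.of_dist_le_mul
        intro x y
        rcases eq_or_ne x y with h' | h'
        · simp [h']
        · simpa [Real.dist_eq] using (hs j h1j hjN x y h').le
      exact this.continuous
    have hrc : Continuous (r j) := by
      have : LipschitzWith 1 (r j) := by
        apply LipschitzWith.of_dist_le_mul
        intro x y
        rcases eq_or_ne x y with h' | h'
        · simp [h']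
        · simpa [Real.dist_eq] using (hr j h1j hjN x y h').le
      exact this.continuous
    have hsh : ContinuousOn (fun x => s j (h x).1) (Icc (t 0) (t N)) :=
      hsc.comp_continuousOn hhc.fst
    have hrh : ContinuousOn (fun x => r j (h x).2) (Icc (t 0) (t N)) :=
      hrc.comp_continuousOn hhc.snd
    simp only [hF]
    exact (((hKb.continuousOn.mul hsh).add (hKc.continuousOn.mul hrh)).add
        hKp.continuousOn).prodMk
      (((hKd.continuousOn.mul hsh).add (hKe.continuousOn.mul hrh)).add hKq.continuousOn)
  -- continuity of each piece
  have hpieceCont : ∀ j, 1 ≤ j → j ≤ N →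
      ContinuousOn (fun y => F j (Linv j y) (h (Linv j y))) (Icc (t (j - 1)) (t j)) := by
    intro j h1j hjN
    have hLc : ContinuousOn (Linv j) (Icc (t (j - 1)) (t j)) := by
      simp only [hLinvDef]
      exact ((continuous_id.sub continuous_const).div_const _).continuousOn
    exact (hGcont j h1j hjN).comp hLc (hLinvMaps j h1j hjN)
  -- index function
  set idx : ℝ → ℕ :=
    fun y => min N (((Finset.range N).filter (fun i => t (i + 1) < y)).card + 1) with hidxDef
  set Rh : ℝ → ℝ × ℝ := fun y => F (idx y) (Linv (idx y) y) (h (Linv (idx y) y)) with hRhDef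
  have hidx : ∀ j, 1 ≤ j → j ≤ N → ∀ y : ℝ, t (j - 1) < y → y ≤ t j → idx y = j := by
    intro j h1j hjN y hy1 hy2
    have hfil : (Finset.range N).filter (fun i => t (i + 1) < y) = Finset.range (j - 1) := by
      ext i
      simp only [Finset.mem_filter, Finset.mem_range]
      constructor
      · rintro ⟨hiN, hti⟩
        by_contra hi
        push_neg at hi
        have : t j ≤ t (i + 1) := tle j (i + 1) (by omega) (by omega)
        linarith
      · intro hi
        refine ⟨by omega, ?_⟩
        have : t (i + 1) ≤ t (j - 1) := tle (i + 1) (j - 1) (by omega) (by omega)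
        linarith
    simp only [hidxDef, hfil, Finset.card_range]
    omega
  have hidx0 : idx (t 0) = 1 := by
    have hfil : (Finset.range N).filter (fun i => t (i + 1) < t 0) = ∅ := by
      apply Finset.filter_eq_empty_iff.mpr
      intro i hi
      simp only [Finset.mem_range] at hi
      have : t 0 < t (i + 1) := tlt 0 (i + 1) (by omega) (by omega)
      linarith
    simp only [hidxDef, hfil, Finset.card_empty]
    omega
  -- interpolation values
  have hval : ∀ m, m ≤ N → Rh (t m) = (v m, w m) := by
    intro m hmN
    rcases Nat.eq_zero_or_pos m with hm0 | hm1
    · subst hm0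
      simp only [hRhDef, hidx0]
      have hl0 : Linv 1 (t 0) = t 0 := by
        have := hLinv0 1 le_rfl hN
        simpa using this
      rw [hl0, hh0]
      have := hF0 1 le_rfl hN
      simpa using this
    · have hidxm : idx (t m) = m :=
        hidx m hm1 hmN (t m) (tlt (m - 1) m (by omega) hmN) le_rfl
      simp only [hRhDef, hidxm, hLinvN m hm1 hmN, hhN]
      exact hFN m hm1 hmN
  -- Rh equals the j-th piece on the j-th subinterval
  have hpiece : ∀ j, 1 ≤ j → j ≤ N → ∀ y ∈ Icc (t (j - 1)) (t j),
      Rh y = F j (Linv j y) (h (Linv j y)) := by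
    intro j h1j hjN y hy
    rcases eq_or_lt_of_le hy.1 with heq | hlt
    · rw [← heq, hval (j - 1) (by omega), hLinv0 j h1j hjN, hh0]
      exact (hF0 j h1j hjN).symm
    · simp only [hRhDef, hidx j h1j hjN y hlt hy.2]
  refine ⟨Rh, ?_, ?_, fun j hjN => hval j hjN⟩
  · -- continuity on [t 0, t N]
    have key : ∀ j, 1 ≤ j → j ≤ N → ContinuousOn Rh (Icc (t 0) (t j)) := by
      intro j
      induction j with
      | zero => omega
      | succ k ih =>
        intro _ hkN
        have hk1 : ContinuousOn Rh (Icc (t k) (t (k + 1))) := by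
          have := (hpieceCont (k + 1) (by omega) hkN).congr
            (fun y hy => hpiece (k + 1) (by omega) hkN y (by simpa using hy))
          simpa using this
        rcases Nat.eq_zero_or_pos k with hk0 | hkpos
        · subst hk0; simpa using hk1
        · exact glue_Icc (tle 0 k (by omega) (by omega))
            (tle k (k + 1) (by omega) hkN) (ih hkpos (by omega)) hk1
    exact key N hN le_rfl
  · -- the self-similarity equations
    intro j h1j hjN x hx
    have haj' := haj j h1j hjN
    have hLmem : L j x ∈ Icc (t (j - 1)) (t j) := by
      rw [hL j h1j hjN]
      constructor
      · rw [← hL0 j h1j hjN, hL j h1j hjN]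
        have : a j * t 0 ≤ a j * x := by nlinarith [hx.1]
        linarith
      · rw [← hLN j h1j hjN, hL j h1j hjN]
        have : a j * x ≤ a j * t N := by nlinarith [hx.2]
        linarith
    rw [hpiece j h1j hjN (L j x) hLmem, hLinvL j h1j hjN x]
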